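/- Define rational numbers a_{ij}^s and r_{ik}^s (1 ≤ i, j, k ≤ m, s ≥ 0) by the double recurrence: a_{ij}^0 = δ_{ij}, r_{ik}^0 = (1 − δ_{ik})/2, r_{ii}^s = 0 for all s, r_{ik}^s = −(1/2) ∑_{c=1}^{s} r_{ik}^{s−c} ∑_{l=1}^{m} ∑_{d=0}^{c} (a_{il}^d − a_{kl}^d)(a_{il}^{c−d} − a_{kl}^{c−d}) for i ≠ k and s ≥ 1, and a_{ij}^{s+1} = (1/(2(s+1)(2s+1))) · ( ∑_{k=1}^{m} ∑_{p=0}^{s} (a_{ij}^p − a_{kj}^p) r_{ik}^{s−p} − ∑_{k=1}^{m} h_{ik}(a_{ij}^s − a_{kj}^s) ). Then for every s ≥ 0 and all i, j, k, the numbers 2^s (2s)! · a_{ij}^s and 2^{s+1} (2s)! · r_{ik}^s are integers. -/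

import Mathlib

def Fq (s : ℕ) : ℚ := 2 ^ s * Nat.factorial (2 * s)

lemma Fq_key {p s : ℕ} (h : p ≤ s) :
    Fq s = (Nat.choose (2 * s) (2 * p) : ℚ) * Fq p * Fq (s - p) := by
  have h2 : 2 * p ≤ 2 * s := by omega
  have hfact := Nat.choose_mul_factorial_mul_factorial h2
  have hsub : 2 * (s - p) = 2 * s - 2 * p := by omega
  unfold Fq
  rw [hsub]
  have hpow : (2 : ℚ) ^ s = 2 ^ p * 2 ^ (s - p) := by rw [← pow_add]; congr 1; omega
  rw [hpow, ← hfact]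
  push_cast
  ring

lemma Fq_succ (n : ℕ) :
    Fq (n + 1) * (1 / (2 * ((n : ℚ) + 1) * (2 * (n : ℚ) + 1))) = 2 * Fq n := by
  have hne : (2 * ((n : ℚ) + 1) * (2 * (n : ℚ) + 1)) ≠ 0 := by positivity
  unfold Fq
  have h1 : 2 * (n + 1) = (2 * n + 1) + 1 := by ring
  rw [h1, Nat.factorial_succ, Nat.factorial_succ]
  field_simp
  push_cast
  ring

lemma even_central (c : ℕ) (hc : 1 ≤ c) : 2 ∣ Nat.choose (2 * c) c := by
  obtain ⟨d, rfl⟩ : ∃ d, c = d + 1 := ⟨c - 1, by omega⟩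
  have h : 2 * (d + 1) = (2 * d + 1) + 1 := by ring
  rw [h, Nat.choose_succ_succ]
  have hsymm : (2 * d + 1).choose d = (2 * d + 1).choose (d + 1) := by
    have := Nat.choose_symm (show d + 1 ≤ 2 * d + 1 by omega)
    simpa [show 2 * d + 1 - (d + 1) = d by omega] using this
  rw [hsymm]
  simp only [Nat.succ_eq_add_one]
  omega

lemma even_sym_sum (c : ℕ) (f : ℕ → ℤ)
    (hsym : ∀ d ≤ c, f d = f (c - d))
    (hmid : ∀ e, c = 2 * e → 2 ∣ f e) :
    2 ∣ ∑ d ∈ Finset.range (c + 1), f d := by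
  rcases Nat.even_or_odd c with ⟨e, he⟩ | ⟨e, he⟩
  · -- c = e + e
    have hc : c = 2 * e := by omega
    have hsplit : ∑ d ∈ Finset.range (c + 1), f d
        = ∑ d ∈ Finset.range (e + 1), f d + ∑ d ∈ Finset.Ico (e + 1) (c + 1), f d := by
      rw [Finset.range_eq_Ico, Finset.range_eq_Ico, ← Finset.sum_Ico_consecutive f (by omega : 0 ≤ e + 1) (by omega : e + 1 ≤ c + 1)]
    have htail : ∑ d ∈ Finset.Ico (e + 1) (c + 1), f d = ∑ d ∈ Finset.range e, f d := by
      have h1 : ∀ d ∈ Finset.Ico (e + 1) (c + 1), f d = f (c - d) := by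
        intro d hd
        exact hsym d (by simp [Finset.mem_Ico] at hd; omega)
      rw [Finset.sum_congr rfl h1, Finset.sum_Ico_reflect f _ (by omega : c + 1 ≤ c + 1)]
      rw [show c + 1 - (c + 1) = 0 by omega, show c + 1 - (e + 1) = e by omega,
        ← Finset.range_eq_Ico]
    rw [hsplit, htail, Finset.sum_range_succ]
    have := hmid e hc
    omega
  · -- c = 2e+1
    have hc : c = 2 * e + 1 := by omega
    have hsplit : ∑ d ∈ Finset.range (c + 1), f d
        = ∑ d ∈ Finset.range (e + 1), f d + ∑ d ∈ Finset.Ico (e + 1) (c + 1), f d := by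
      rw [Finset.range_eq_Ico, Finset.range_eq_Ico, ← Finset.sum_Ico_consecutive f (by omega : 0 ≤ e + 1) (by omega : e + 1 ≤ c + 1)]
    have htail : ∑ d ∈ Finset.Ico (e + 1) (c + 1), f d = ∑ d ∈ Finset.range (e + 1), f d := by
      have h1 : ∀ d ∈ Finset.Ico (e + 1) (c + 1), f d = f (c - d) := by
        intro d hd
        exact hsym d (by simp [Finset.mem_Ico] at hd; omega)
      rw [Finset.sum_congr rfl h1, Finset.sum_Ico_reflect f _ (by omega : c + 1 ≤ c + 1)]
      rw [show c + 1 - (c + 1) = 0 by omega, show c + 1 - (e + 1) = e + 1 by omega,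
        ← Finset.range_eq_Ico]
    rw [hsplit, htail]
    omega

lemma exists_int_sum {α : Type*} (t : Finset α) (f : α → ℚ)
    (hf : ∀ x ∈ t, ∃ z : ℤ, f x = z) : ∃ z : ℤ, ∑ x ∈ t, f x = z := by
  refine Finset.sum_induction f (fun q => ∃ z : ℤ, q = z) ?_ ⟨0, by simp⟩ hf
  rintro p q ⟨z1, rfl⟩ ⟨z2, rfl⟩
  exact ⟨z1 + z2, by push_cast; ring⟩

lemma exists_int_sum2 {α : Type*} (t : Finset α) (f : α → ℚ)
    (hf : ∀ x ∈ t, ∃ z : ℤ, f x = 2 * z) : ∃ z : ℤ, ∑ x ∈ t, f x = 2 * z := by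
  refine Finset.sum_induction f (fun q => ∃ z : ℤ, q = 2 * (z : ℚ)) ?_ ⟨0, by simp⟩ hf
  rintro p q ⟨z1, rfl⟩ ⟨z2, rfl⟩
  exact ⟨z1 + z2, by push_cast; ring⟩

theorem recurrence_denominator_bound (m : ℕ) (hm : 2 ≤ m)
    (h : Matrix (Fin m) (Fin m) ℚ)
    (hsymm : ∀ i k, h i k = h k i) (hdiag : ∀ i, h i i = 0)
    (h01 : ∀ i k, h i k = 0 ∨ h i k = 1)
    (a r : ℕ → Fin m → Fin m → ℚ)
    (ha0 : ∀ i j, a 0 i j = if i = j then 1 else 0)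
    (hr0 : ∀ i k, r 0 i k = if i = k then 0 else 1 / 2)
    (hrdiag : ∀ s i, r s i i = 0)
    (hrrec : ∀ s : ℕ, ∀ i k : Fin m, i ≠ k →
      r (s + 1) i k = -(1 / 2) * ∑ c ∈ Finset.Icc 1 (s + 1), r (s + 1 - c) i k *
        ∑ l, ∑ d ∈ Finset.range (c + 1),
          (a d i l - a d k l) * (a (c - d) i l - a (c - d) k l))
    (harec : ∀ s : ℕ, ∀ i j : Fin m,
      a (s + 1) i j = (1 / (2 * ((s : ℚ) + 1) * (2 * (s : ℚ) + 1))) *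
        ((∑ k, ∑ p ∈ Finset.range (s + 1), (a p i j - a p k j) * r (s - p) i k) -
          ∑ k, h i k * (a s i j - a s k j))) :
    ∀ s : ℕ, ∀ i j k : Fin m,
      (∃ z : ℤ, ((2 : ℚ) ^ s * Nat.factorial (2 * s)) * a s i j = z) ∧
      (∃ z : ℤ, ((2 : ℚ) ^ (s + 1) * Nat.factorial (2 * s)) * r s i k = z) := by
  suffices H : ∀ s : ℕ, (∀ i j : Fin m, ∃ z : ℤ, Fq s * a s i j = z) ∧
      (∀ i k : Fin m, ∃ z : ℤ, 2 * Fq s * r s i k = z) by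
    intro s i j k
    refine ⟨?_, ?_⟩
    · obtain ⟨z, hz⟩ := (H s).1 i j
      exact ⟨z, by unfold Fq at hz; exact hz⟩
    · obtain ⟨z, hz⟩ := (H s).2 i k
      refine ⟨z, ?_⟩
      unfold Fq at hz
      rw [← hz]
      ring
  intro s
  induction s using Nat.strong_induction_on with
  | _ s ih =>
    rcases s with _ | n
    · constructor
      · intro i j
        refine ⟨if i = j then 1 else 0, ?_⟩
        by_cases hij : i = j <;> simp [Fq, ha0, hij]
      · intro i k
        refine ⟨if i = k then 0 else 1, ?_⟩
        by_cases hik : i = k <;> simp [Fq, hr0, hik] <;> norm_num [Nat.factorial]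
    · -- step case: s = n + 1
      have hA : ∀ i j : Fin m, ∃ z : ℤ, Fq (n + 1) * a (n + 1) i j = z := by
        intro i j
        obtain ⟨z1, h1⟩ : ∃ z : ℤ, 2 * Fq n *
            (∑ k, ∑ p ∈ Finset.range (n + 1), (a p i j - a p k j) * r (n - p) i k) = z := by
          rw [Finset.mul_sum]
          apply exists_int_sum
          intro k _
          rw [Finset.mul_sum]
          apply exists_int_sum
          intro p hp
          have hpn : p ≤ n := by simpa [Nat.lt_succ_iff] using hp
          obtain ⟨x1, hx1⟩ := (ih p (by omega)).1 i j
          obtain ⟨x2, hx2⟩ := (ih p (by omega)).1 k j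
          obtain ⟨x3, hx3⟩ := (ih (n - p) (by omega)).2 i k
          refine ⟨(Nat.choose (2 * n) (2 * p) : ℤ) * (x1 - x2) * x3, ?_⟩
          have step : 2 * Fq n * ((a p i j - a p k j) * r (n - p) i k)
              = (Nat.choose (2 * n) (2 * p) : ℚ) * (Fq p * a p i j - Fq p * a p k j) *
                (2 * Fq (n - p) * r (n - p) i k) := by
            rw [Fq_key hpn]; ring
          rw [step, hx1, hx2, hx3]
          push_cast
          ring
        obtain ⟨z2, h2⟩ : ∃ z : ℤ, 2 * Fq n *
            (∑ k, h i k * (a n i j - a n k j)) = z := by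
          rw [Finset.mul_sum]
          apply exists_int_sum
          intro k _
          obtain ⟨x1, hx1⟩ := (ih n (by omega)).1 i j
          obtain ⟨x2, hx2⟩ := (ih n (by omega)).1 k j
          rcases h01 i k with h' | h'
          · exact ⟨0, by rw [h']; simp⟩
          · refine ⟨2 * (x1 - x2), ?_⟩
            have step : 2 * Fq n * (h i k * (a n i j - a n k j))
                = h i k * (2 * (Fq n * a n i j - Fq n * a n k j)) := by ring
            rw [step, hx1, hx2, h']
            push_cast
            ring
        refine ⟨z1 - z2, ?_⟩
        rw [harec n i j]
        have hc := Fq_succ n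
        push_cast
        linear_combination ((∑ k, ∑ p ∈ Finset.range (n + 1), (a p i j - a p k j) * r (n - p) i k)
          - ∑ k, h i k * (a n i j - a n k j)) * hc + h1 - h2
      have hAall : ∀ t, t ≤ n + 1 → ∀ i j : Fin m, ∃ z : ℤ, Fq t * a t i j = z := by
        intro t ht i j
        rcases ht.lt_or_eq with h' | rfl
        · exact (ih t h').1 i j
        · exact hA i j
      refine ⟨hA, ?_⟩
      intro i k
      by_cases hik : i = k
      · exact ⟨0, by rw [hik, hrdiag]; ring⟩
      · obtain ⟨z, hz⟩ : ∃ z : ℤ, Fq (n + 1) *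
            (∑ c ∈ Finset.Icc 1 (n + 1), r (n + 1 - c) i k *
              ∑ l, ∑ d ∈ Finset.range (c + 1),
                (a d i l - a d k l) * (a (c - d) i l - a (c - d) k l)) = z := by
          rw [Finset.mul_sum]
          apply exists_int_sum
          intro c hc
          obtain ⟨hc1, hc2⟩ := Finset.mem_Icc.mp hc
          obtain ⟨z1, h1⟩ := (ih (n + 1 - c) (by omega)).2 i k
          obtain ⟨w, hw⟩ : ∃ w : ℤ, Fq c *
              (∑ l, ∑ d ∈ Finset.range (c + 1),
                (a d i l - a d k l) * (a (c - d) i l - a (c - d) k l)) = 2 * w := by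
            rw [Finset.mul_sum]
            apply exists_int_sum2
            intro l _
            have hx : ∀ d, ∃ x : ℤ, d ≤ n + 1 → Fq d * (a d i l - a d k l) = x := by
              intro d
              by_cases hd : d ≤ n + 1
              · obtain ⟨y1, hy1⟩ := hAall d hd i l
                obtain ⟨y2, hy2⟩ := hAall d hd k l
                exact ⟨y1 - y2, fun _ => by push_cast; linear_combination hy1 - hy2⟩
              · exact ⟨0, fun h' => absurd h' hd⟩
            choose x hx using hx
            have hterm : ∀ d ∈ Finset.range (c + 1),
                Fq c * ((a d i l - a d k l) * (a (c - d) i l - a (c - d) k l))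
                = (((Nat.choose (2 * c) (2 * d) : ℤ) * x d * x (c - d) : ℤ) : ℚ) := by
              intro d hd
              have hdc : d ≤ c := by simpa [Nat.lt_succ_iff] using hd
              have hh1 := hx d (by omega)
              have hh2 := hx (c - d) (by omega)
              calc Fq c * ((a d i l - a d k l) * (a (c - d) i l - a (c - d) k l))
                  = (Nat.choose (2 * c) (2 * d) : ℚ) * (Fq d * (a d i l - a d k l)) *
                    (Fq (c - d) * (a (c - d) i l - a (c - d) k l)) := by
                    rw [Fq_key hdc]; ring
                _ = (Nat.choose (2 * c) (2 * d) : ℚ) * (x d : ℚ) * (x (c - d) : ℚ) := by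
                    rw [hh1, hh2]
                _ = (((Nat.choose (2 * c) (2 * d) : ℤ) * x d * x (c - d) : ℤ) : ℚ) := by
                    push_cast; ring
            obtain ⟨w, hwz⟩ : 2 ∣ ∑ d ∈ Finset.range (c + 1),
                (Nat.choose (2 * c) (2 * d) : ℤ) * x d * x (c - d) := by
              apply even_sym_sum c (fun d => (Nat.choose (2 * c) (2 * d) : ℤ) * x d * x (c - d))
              · intro d hdc
                have hch : Nat.choose (2 * c) (2 * (c - d)) = Nat.choose (2 * c) (2 * d) := by
                  rw [show 2 * (c - d) = 2 * c - 2 * d by omega]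
                  exact Nat.choose_symm (by omega)
                simp only [hch, show c - (c - d) = d by omega]
                ring
              · intro e he
                have hcent := even_central (2 * e) (by omega)
                rw [show c - e = e by omega, he, show 2 * e = 2 * (2 * e) / 2 by omega]
                rw [show 2 * (2 * e) / 2 = 2 * e by omega]
                exact Dvd.dvd.mul_right (Dvd.dvd.mul_right
                  (Int.natCast_dvd_natCast.mpr hcent) _) _
            refine ⟨w, ?_⟩
            rw [Finset.mul_sum, Finset.sum_congr rfl hterm, ← Int.cast_sum, hwz]
            push_cast
            ring
          refine ⟨(Nat.choose (2 * (n + 1)) (2 * c) : ℤ) * z1 * w, ?_⟩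
          have step : Fq (n + 1) * (r (n + 1 - c) i k *
              ∑ l, ∑ d ∈ Finset.range (c + 1),
                (a d i l - a d k l) * (a (c - d) i l - a (c - d) k l))
              = (Nat.choose (2 * (n + 1)) (2 * c) : ℚ) *
                (2 * Fq (n + 1 - c) * r (n + 1 - c) i k) *
                (Fq c * (∑ l, ∑ d ∈ Finset.range (c + 1),
                  (a d i l - a d k l) * (a (c - d) i l - a (c - d) k l))) * (1 / 2) * (1 / 2) *
                  2 := by
            rw [Fq_key hc2]; ring
          rw [step, h1, hw]
          push_cast
          ring
        refine ⟨-z, ?_⟩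
        rw [hrrec n i k hik]
        push_cast
        linear_combination -hz
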